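/- Let S and R be rings and T an (S,R)-bimodule. If S is left coherent, then for every injective right R-module I, the flat dimension of the right S-module Hom_R(T, I) is at most the injective dimension of T as a left S-module. -/

import Mathlib

open Function MulOpposite

universe u

noncomputable section

/-! ## Chain conditions -/

/-- A ring is right coherent if every finitely generated right ideal is finitely presented. -/
def IsRightCoherentRing (R : Type u) [Ring R] : Prop :=
  ∀ I : Submodule Rᵐᵒᵖ R, I.FG → Module.FinitePresentation Rᵐᵒᵖ I

/-- A ring is left coherent if every finitely generated left ideal is finitely presented. -/
def IsLeftCoherentRing (S : Type u) [Ring S] : Prop :=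
  ∀ I : Submodule S S, I.FG → Module.FinitePresentation S I

/-- A ring is right Noetherian if every right ideal is finitely generated. -/
def IsRightNoetherianRing (R : Type u) [Ring R] : Prop :=
  ∀ I : Submodule Rᵐᵒᵖ R, I.FG

/-! ## The tensor product `N ⊗_S T` of a right `S`-module `N` with a left `S`-module `T` -/

section MTensor

variable (S : Type u) [Ring S]
variable (N : Type u) [AddCommGroup N] [Module Sᵐᵒᵖ N]
variable (T : Type u) [AddCommGroup T] [Module S T]

/-- The subgroup of balancing relations defining `N ⊗_S T` as a quotient of `T ⊗_ℤ N`. -/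
def mtRel : AddSubgroup (TensorProduct ℤ T N) :=
  AddSubgroup.closure
    {x | ∃ (s : S) (t : T) (n : N), x = (s • t) ⊗ₜ[ℤ] n - t ⊗ₜ[ℤ] (op s • n)}

/-- `MTensor S N T` is the tensor product `N ⊗_S T` of a right `S`-module `N` with a left
`S`-module `T`, realized as a quotient of `T ⊗_ℤ N`. -/
def MTensor : Type u := TensorProduct ℤ T N ⧸ mtRel S N T

instance : AddCommGroup (MTensor S N T) :=
  inferInstanceAs (AddCommGroup (TensorProduct ℤ T N ⧸ mtRel S N T))

variable {S N T}

/-- `MTensor.mk n t` is the element `n ⊗ t` of `N ⊗_S T`. -/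
def MTensor.mk (n : N) (t : T) : MTensor S N T := QuotientAddGroup.mk (t ⊗ₜ[ℤ] n)

section Map

variable {N' : Type u} [AddCommGroup N'] [Module Sᵐᵒᵖ N']

/-- Functoriality of `N ⊗_S T` in the right `S`-module variable `N`. -/
def MTensor.map (g : N →ₗ[Sᵐᵒᵖ] N') : MTensor S N T →+ MTensor S N' T :=
  QuotientAddGroup.map _ _
    (LinearMap.lTensor T g.toAddMonoidHom.toIntLinearMap).toAddMonoidHom
    (by
      refine (AddSubgroup.closure_le _).2 ?_
      rintro x ⟨s, t, n, rfl⟩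
      simp only [SetLike.mem_coe, AddSubgroup.mem_comap, LinearMap.toAddMonoidHom_coe,
        map_sub, LinearMap.lTensor_tmul, AddMonoidHom.coe_toIntLinearMap,
        LinearMap.toAddMonoidHom_coe, map_smul]
      exact AddSubgroup.subset_closure ⟨s, t, g n, rfl⟩)

end Map

section LMap

variable {T' : Type u} [AddCommGroup T'] [Module S T']

/-- Functoriality of `N ⊗_S T` in the left `S`-module variable `T`. -/
def MTensor.lmap (h : T →ₗ[S] T') : MTensor S N T →+ MTensor S N T' :=
  QuotientAddGroup.map _ _
    (LinearMap.rTensor N h.toAddMonoidHom.toIntLinearMap).toAddMonoidHom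
    (by
      refine (AddSubgroup.closure_le _).2 ?_
      rintro x ⟨s, t, n, rfl⟩
      simp only [SetLike.mem_coe, AddSubgroup.mem_comap, LinearMap.toAddMonoidHom_coe,
        map_sub, LinearMap.rTensor_tmul, AddMonoidHom.coe_toIntLinearMap, map_smul]
      exact AddSubgroup.subset_closure ⟨s, h t, n, rfl⟩)

end LMap

section Bimod

variable (R : Type u) [Ring R] [Module Rᵐᵒᵖ T] [SMulCommClass S Rᵐᵒᵖ T]

instance MTensor.instSMul : SMul Rᵐᵒᵖ (MTensor S N T) :=
  ⟨fun ρ =>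
    QuotientAddGroup.map _ _ (DistribMulAction.toAddMonoidHom (TensorProduct ℤ T N) ρ)
      (by
        refine (AddSubgroup.closure_le _).2 ?_
        rintro x ⟨s, t, n, rfl⟩
        simp only [SetLike.mem_coe, AddSubgroup.mem_comap,
          DistribMulAction.toAddMonoidHom_apply, smul_sub, TensorProduct.smul_tmul']
        exact AddSubgroup.subset_closure ⟨s, ρ • t, n, by rw [smul_comm s ρ t]⟩)⟩

instance MTensor.instModule : Module Rᵐᵒᵖ (MTensor S N T) :=
  Function.Surjective.module Rᵐᵒᵖ (QuotientAddGroup.mk' (mtRel S N T))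
    (QuotientAddGroup.mk'_surjective _) (fun _ _ => rfl)

theorem MTensor.smul_mk (ρ : Rᵐᵒᵖ) (n : N) (t : T) :
    ρ • (MTensor.mk n t : MTensor S N T) = MTensor.mk n (ρ • t) := by
  show QuotientAddGroup.mk (ρ • (t ⊗ₜ[ℤ] n)) = QuotientAddGroup.mk ((ρ • t) ⊗ₜ[ℤ] n)
  rw [TensorProduct.smul_tmul']

theorem MTensor.mk_add_right (n : N) (t t' : T) :
    (MTensor.mk n (t + t') : MTensor S N T) = MTensor.mk n t + MTensor.mk n t' := by
  show QuotientAddGroup.mk _ = _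
  rw [TensorProduct.add_tmul]
  rfl

/-- The natural map `θ_N : N → Hom_R(T, N ⊗_S T)`, `n ↦ (t ↦ n ⊗ t)`. -/
def MTensor.theta (n : N) : T →ₗ[Rᵐᵒᵖ] MTensor S N T where
  toFun t := MTensor.mk n t
  map_add' t t' := MTensor.mk_add_right n t t'
  map_smul' ρ t := (MTensor.smul_mk R ρ n t).symm

variable (S T N) in
/-- The natural map `θ_N : N → Hom_R(T, N ⊗_S T)` as a function. -/
def MTensor.thetaFun : N → (T →ₗ[Rᵐᵒᵖ] MTensor S N T) := fun n => MTensor.theta R n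

end Bimod

end MTensor

/-! ## The right `S`-module structure on `Hom_A(T, M)` induced by a left `S`-action on `T` -/

section HomModule

variable {B A : Type u} [Ring B] [Ring A]
variable {T : Type u} [AddCommGroup T] [Module A T] [Module B T] [SMulCommClass B A T]
variable {M : Type u} [AddCommGroup M] [Module A M]

instance homDomSMul : SMul Bᵐᵒᵖ (T →ₗ[A] M) :=
  ⟨fun b f =>
    { toFun := fun t => f (b.unop • t)
      map_add' := fun t t' => by
        show f (b.unop • (t + t')) = f (b.unop • t) + f (b.unop • t')
        rw [smul_add, map_add]
      map_smul' := fun a t => by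
        show f (b.unop • a • t) = a • f (b.unop • t)
        rw [smul_comm b.unop a t, map_smul] }⟩

@[simp] theorem homDomSMul_apply (b : Bᵐᵒᵖ) (f : T →ₗ[A] M) (t : T) :
    (b • f) t = f (b.unop • t) := rfl

instance homDomModule : Module Bᵐᵒᵖ (T →ₗ[A] M) where
  one_smul f := LinearMap.ext fun t => by simp
  mul_smul b b' f := LinearMap.ext fun t => by simp [mul_smul]
  smul_zero b := LinearMap.ext fun t => rfl
  smul_add b f g := LinearMap.ext fun t => rfl
  add_smul b b' f := LinearMap.ext fun t => by simp [add_smul]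
  zero_smul f := LinearMap.ext fun t => by simp

end HomModule

/-! ## The evaluation map `ν_M : Hom_R(T, M) ⊗_S T → M` -/

section Nu

variable (S R : Type u) [Ring S] [Ring R]
variable (T : Type u) [AddCommGroup T] [Module S T] [Module Rᵐᵒᵖ T] [SMulCommClass S Rᵐᵒᵖ T]
variable (M : Type u) [AddCommGroup M] [Module Rᵐᵒᵖ M]

/-- The evaluation map `ν_M : Hom_R(T, M) ⊗_S T → M`, `f ⊗ t ↦ f t`. -/
def MTensor.nuFun : MTensor S (T →ₗ[Rᵐᵒᵖ] M) T →+ M :=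
  QuotientAddGroup.lift _
    (TensorProduct.liftAddHom
      { toFun := fun t =>
          { toFun := fun f : T →ₗ[Rᵐᵒᵖ] M => f t
            map_zero' := rfl
            map_add' := fun f g => rfl }
        map_zero' := AddMonoidHom.ext fun f => f.map_zero
        map_add' := fun t t' => AddMonoidHom.ext fun f => f.map_add t t' }
      (fun z t f => by
        show f (z • t) = (z • f) t
        rw [map_zsmul, LinearMap.smul_apply]))
    (by
      refine (AddSubgroup.closure_le _).2 ?_
      rintro x ⟨s, t, f, rfl⟩
      simp only [SetLike.mem_coe, AddMonoidHom.mem_ker, map_sub,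
        TensorProduct.liftAddHom_tmul, AddMonoidHom.coe_mk, ZeroHom.coe_mk]
      show f (s • t) - (op s • f) t = 0
      rw [homDomSMul_apply]
      simp)

end Nu


/-! ## Resolutions and derived-functor vanishing -/

/-- The data of a nonnegatively graded chain complex `⋯ → P 1 → P 0 → X` of `A`-modules. -/
structure ResolutionData (A : Type u) [Ring A] (X : Type u) [AddCommGroup X] [Module A X] :
    Type (u + 1) where
  P : ℕ → Type u
  [instAdd : ∀ n, AddCommGroup (P n)]
  [instMod : ∀ n, Module A (P n)]
  d : ∀ n, P (n + 1) →ₗ[A] P n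
  ε : P 0 →ₗ[A] X

attribute [instance] ResolutionData.instAdd ResolutionData.instMod

/-- The property of being a projective resolution. -/
structure ResolutionData.IsProjResolution {A : Type u} [Ring A] {X : Type u} [AddCommGroup X]
    [Module A X] (Q : ResolutionData A X) : Prop where
  proj : ∀ n, Module.Projective A (Q.P n)
  surj : Function.Surjective Q.ε
  exact0 : Function.Exact (Q.d 0) Q.ε
  exactSucc : ∀ n, Function.Exact (Q.d (n + 1)) (Q.d n)

/-- `X` has a resolution by finitely generated projective `A`-modules. -/
def HasFGProjResolution (A : Type u) [Ring A] (X : Type u) [AddCommGroup X] [Module A X] : Prop :=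
  ∃ Q : ResolutionData A X, Q.IsProjResolution ∧ ∀ n, Module.Finite A (Q.P n)

/-- `Ext^i_A(X, Y) = 0` for all `i ≥ 1`: some (equivalently, any) projective resolution of `X`
has `Hom_A(-, Y)`-complex exact at all positive degrees. -/
def ExtVanishAll (A : Type u) [Ring A] (X Y : Type u) [AddCommGroup X] [Module A X]
    [AddCommGroup Y] [Module A Y] : Prop :=
  ∃ Q : ResolutionData A X, Q.IsProjResolution ∧
    ∀ j : ℕ, Function.Exact
      (fun f : Q.P j →ₗ[A] Y => f.comp (Q.d j))
      (fun f : Q.P (j + 1) →ₗ[A] Y => f.comp (Q.d (j + 1)))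

/-- `Ext^1_A(X, Y) = 0`: every short exact sequence `0 → Y → E → X → 0` splits. -/
def Ext1Vanishes (A : Type u) [Ring A] (X Y : Type u) [AddCommGroup X] [Module A X]
    [AddCommGroup Y] [Module A Y] : Prop :=
  ∀ (E : Type u) [AddCommGroup E] [Module A E] (i : Y →ₗ[A] E) (p : E →ₗ[A] X),
    Function.Injective i → Function.Surjective p → Function.Exact i p →
      ∃ s : X →ₗ[A] E, p.comp s = LinearMap.id

/-- `Tor^S_i(N, T) = 0` for all `i ≥ 1`: some (equivalently, any) projective resolution of the
right `S`-module `N` stays exact in positive degrees after applying `- ⊗_S T`. -/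
def TorVanishAll (S : Type u) [Ring S] (N : Type u) [AddCommGroup N] [Module Sᵐᵒᵖ N]
    (T : Type u) [AddCommGroup T] [Module S T] : Prop :=
  ∃ Q : ResolutionData Sᵐᵒᵖ N, Q.IsProjResolution ∧
    ∀ j : ℕ, Function.Exact
      (⇑(MTensor.map (T := T) (Q.d (j + 1))))
      (⇑(MTensor.map (T := T) (Q.d j)))

/-! ## Homological dimensions -/

/-- A surjection onto `M` from some module. -/
structure EpiOnto (A : Type u) [Ring A] (M : ModuleCat.{u} A) : Type (u + 1) where
  P : ModuleCat.{u} A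
  f : P →ₗ[A] M
  surj : Function.Surjective f

/-- An injection of `M` into some module. -/
structure MonoInto (A : Type u) [Ring A] (M : ModuleCat.{u} A) : Type (u + 1) where
  E : ModuleCat.{u} A
  f : M →ₗ[A] E
  inj : Function.Injective f

/-- `HasClassResolution A 𝒞 n M` says that there is an exact sequence
`0 → C_n → ⋯ → C_0 → M → 0` with all `C_i` in the class `𝒞`. -/
def HasClassResolution (A : Type u) [Ring A] (C : ModuleCat.{u} A → Prop) :
    ℕ → ModuleCat.{u} A → Prop
  | 0, M => C M
  | n + 1, M => ∃ e : EpiOnto A M, C e.P ∧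
      HasClassResolution A C n (ModuleCat.of A (LinearMap.ker e.f))

/-- `HasClassCoresolution A 𝒞 n M` says that there is an exact sequence
`0 → M → C^0 → ⋯ → C^n → 0` with all `C^i` in the class `𝒞`. -/
def HasClassCoresolution (A : Type u) [Ring A] (C : ModuleCat.{u} A → Prop) :
    ℕ → ModuleCat.{u} A → Prop
  | 0, M => C M
  | n + 1, M => ∃ m : MonoInto A M, C m.E ∧
      HasClassCoresolution A C n (ModuleCat.of A ((↥m.E) ⧸ LinearMap.range m.f))

/-- The projective dimension of `M` is at most `n`. -/
def ProjDimLE (A : Type u) [Ring A] (M : Type u) [AddCommGroup M] [Module A M] (n : ℕ) : Prop :=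
  HasClassResolution A (fun P => Module.Projective A P) n (ModuleCat.of A M)

/-- The injective dimension of `M` is at most `n`. -/
def InjDimLE (A : Type u) [Ring A] (M : Type u) [AddCommGroup M] [Module A M] (n : ℕ) : Prop :=
  HasClassCoresolution A (fun E => Module.Injective A E) n (ModuleCat.of A M)

/-- A right `S`-module `N` is flat if `N ⊗_S -` preserves injections of left `S`-modules. -/
def IsFlatRightModule (S : Type u) [Ring S] (N : Type u) [AddCommGroup N] [Module Sᵐᵒᵖ N] :
    Prop :=
  ∀ (X Y : Type u) [AddCommGroup X] [Module S X] [AddCommGroup Y] [Module S Y]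
    (g : X →ₗ[S] Y), Function.Injective g →
      Function.Injective (MTensor.lmap (N := N) g)

/-- The flat dimension of the right `S`-module `N` is at most `n`. -/
def FlatDimLE (S : Type u) [Ring S] (N : Type u) [AddCommGroup N] [Module Sᵐᵒᵖ N] (n : ℕ) :
    Prop :=
  HasClassResolution Sᵐᵒᵖ (fun P => IsFlatRightModule S P) n (ModuleCat.of Sᵐᵒᵖ N)

/-! ## Gorenstein homological algebra -/

/-- The data of a `ℤ`-indexed complex of `A`-modules. -/
structure ZComplex (A : Type u) [Ring A] : Type (u + 1) where
  P : ℤ → Type u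
  [instAdd : ∀ i, AddCommGroup (P i)]
  [instMod : ∀ i, Module A (P i)]
  d : ∀ i, P i →ₗ[A] P (i + 1)

attribute [instance] ZComplex.instAdd ZComplex.instMod

/-- Exactness of a `ℤ`-indexed complex. -/
def ZComplex.IsExact {A : Type u} [Ring A] (C : ZComplex A) : Prop :=
  ∀ i, Function.Exact (C.d i) (C.d (i + 1))

/-- A module is Gorenstein projective if it is a kernel of a totally acyclic complex of
projective modules. -/
def IsGorensteinProjective (A : Type u) [Ring A] (N : Type u) [AddCommGroup N] [Module A N] :
    Prop :=
  ∃ C : ZComplex A, (∀ i, Module.Projective A (C.P i)) ∧ C.IsExact ∧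
    (∀ (Q : Type u) [AddCommGroup Q] [Module A Q], Module.Projective A Q →
      ∀ i, Function.Exact
        (fun f : C.P (i + 1 + 1) →ₗ[A] Q => f.comp (C.d (i + 1)))
        (fun f : C.P (i + 1) →ₗ[A] Q => f.comp (C.d i))) ∧
    Nonempty (N ≃ₗ[A] LinearMap.ker (C.d 0))

/-- A module is Gorenstein injective if it is a kernel of a totally acyclic complex of
injective modules. -/
def IsGorensteinInjective (A : Type u) [Ring A] (M : Type u) [AddCommGroup M] [Module A M] :
    Prop :=
  ∃ C : ZComplex A, (∀ i, Module.Injective A (C.P i)) ∧ C.IsExact ∧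
    (∀ (I : Type u) [AddCommGroup I] [Module A I], Module.Injective A I →
      ∀ i, Function.Exact
        (fun f : I →ₗ[A] C.P i => (C.d i).comp f)
        (fun f : I →ₗ[A] C.P (i + 1) => (C.d (i + 1)).comp f)) ∧
    Nonempty (M ≃ₗ[A] LinearMap.ker (C.d 0))

/-- A right `S`-module is Gorenstein flat if it is a kernel of a complex of flat right
`S`-modules which stays exact after tensoring with any injective left `S`-module. -/
def IsGorensteinFlat (S : Type u) [Ring S] (N : Type u) [AddCommGroup N] [Module Sᵐᵒᵖ N] :
    Prop :=
  ∃ C : ZComplex Sᵐᵒᵖ, (∀ i, IsFlatRightModule S (C.P i)) ∧ C.IsExact ∧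
    (∀ (I : Type u) [AddCommGroup I] [Module S I], Module.Injective S I →
      ∀ i, Function.Exact
        (⇑(MTensor.map (T := I) (C.d i)))
        (⇑(MTensor.map (T := I) (C.d (i + 1))))) ∧
    Nonempty (N ≃ₗ[Sᵐᵒᵖ] LinearMap.ker (C.d 0))

/-- The Gorenstein projective dimension of `N` is at most `n`. -/
def GpdLE (A : Type u) [Ring A] (N : Type u) [AddCommGroup N] [Module A N] (n : ℕ) : Prop :=
  HasClassResolution A (fun P => IsGorensteinProjective A P) n (ModuleCat.of A N)

/-- The Gorenstein flat dimension of the right `S`-module `N` is at most `n`. -/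
def GfdLE (S : Type u) [Ring S] (N : Type u) [AddCommGroup N] [Module Sᵐᵒᵖ N] (n : ℕ) : Prop :=
  HasClassResolution Sᵐᵒᵖ (fun P => IsGorensteinFlat S P) n (ModuleCat.of Sᵐᵒᵖ N)

/-- The Gorenstein injective dimension of `M` is at most `n`. -/
def GidLE (A : Type u) [Ring A] (M : Type u) [AddCommGroup M] [Module A M] (n : ℕ) : Prop :=
  HasClassCoresolution A (fun E => IsGorensteinInjective A E) n (ModuleCat.of A M)

/-! ## Module classes `Prod(C)`, `Add(C)`, `add(C)` and (co)generators -/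

/-- `M` is a retract (equivalently, a direct summand up to isomorphism) of `P`. -/
def IsRetractOf (A : Type u) [Ring A] (M P : Type u) [AddCommGroup M] [Module A M]
    [AddCommGroup P] [Module A P] : Prop :=
  ∃ (f : M →ₗ[A] P) (g : P →ₗ[A] M), g.comp f = LinearMap.id

/-- `Prod(C)`: direct summands of direct products of copies of `C`. -/
def InProdClass (A : Type u) [Ring A] (C : Type u) [AddCommGroup C] [Module A C]
    (M : ModuleCat.{u} A) : Prop :=
  ∃ I : Type u, IsRetractOf A M (I → C)

/-- `Add(C)`: direct summands of direct sums of copies of `C`. -/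
def InAddClass (A : Type u) [Ring A] (C : Type u) [AddCommGroup C] [Module A C]
    (M : ModuleCat.{u} A) : Prop :=
  ∃ I : Type u, IsRetractOf A M (I →₀ C)

/-- `add(C)`: direct summands of finite direct sums of copies of `C`. -/
def InFinAddClass (A : Type u) [Ring A] (C : Type u) [AddCommGroup C] [Module A C]
    (M : ModuleCat.{u} A) : Prop :=
  ∃ k : ℕ, IsRetractOf A M (Fin k → C)

/-- `Q` is an injective cogenerator: `Q` is injective and every module embeds into a direct
product of copies of `Q`. -/
def IsInjectiveCogenerator (A : Type u) [Ring A] (Q : Type u) [AddCommGroup Q] [Module A Q] :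
    Prop :=
  Module.Injective A Q ∧
    ∀ (M : Type u) [AddCommGroup M] [Module A M],
      ∃ (I : Type u) (f : M →ₗ[A] (I → Q)), Function.Injective f

/-- `E` is the minimal injective cogenerator: it is an injective cogenerator which is a direct
summand of every injective cogenerator. -/
def IsMinimalInjectiveCogenerator (A : Type u) [Ring A] (E : Type u) [AddCommGroup E]
    [Module A E] : Prop :=
  IsInjectiveCogenerator A E ∧
    ∀ (Q : Type u) [AddCommGroup Q] [Module A Q],
      IsInjectiveCogenerator A Q → IsRetractOf A E Q

/-! ## Bimodules, homotheties, Wakamatsu tilting bimodules -/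

section Bimodules

variable (S R : Type u) [Ring S] [Ring R]
variable (T : Type u) [AddCommGroup T] [Module S T] [Module Rᵐᵒᵖ T] [SMulCommClass S Rᵐᵒᵖ T]

/-- The natural map `S → End(T_R)` given by the left `S`-action. -/
def leftHomothety : S → (T →ₗ[Rᵐᵒᵖ] T) := fun s =>
  { toFun := fun t => s • t
    map_add' := fun t t' => smul_add s t t'
    map_smul' := fun ρ t => smul_comm s ρ t }

/-- The natural map `R → End(_S T)` given by the right `R`-action. -/
def rightHomothety : R → (T →ₗ[S] T) := fun r =>
  { toFun := fun t => op r • t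
    map_add' := fun t t' => smul_add (op r) t t'
    map_smul' := fun s t => (smul_comm s (op r) t).symm }

/-- A Wakamatsu tilting `(S, R)`-bimodule: `T` admits resolutions by finitely generated
projectives on both sides, the natural maps `S → End(T_R)` and `R → End(_S T)` are
isomorphisms, and `Ext^i(T, T) = 0` on both sides for all `i ≥ 1`. -/
structure IsWakamatsuTilting : Prop where
  fgProjResR : HasFGProjResolution Rᵐᵒᵖ T
  fgProjResS : HasFGProjResolution S T
  bijS : Function.Bijective (leftHomothety S R T)
  bijR : Function.Bijective (rightHomothety S R T)
  extR : ExtVanishAll Rᵐᵒᵖ T T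
  extS : ExtVanishAll S T T

/-- An `(S, R)`-bimodule `T` is tensorly faithful if `T ⊗_R M = 0` implies `M = 0` and
`N ⊗_S T = 0` implies `N = 0`. -/
def IsTensorlyFaithful : Prop :=
  (∀ (M : Type u) [AddCommGroup M] [Module R M],
      Subsingleton (MTensor R T M) → Subsingleton M) ∧
  (∀ (N : Type u) [AddCommGroup N] [Module Sᵐᵒᵖ N],
      Subsingleton (MTensor S N T) → Subsingleton N)

/-- Membership in the Auslander class `𝒜_T(S)`. -/
structure InAuslanderClass (N : Type u) [AddCommGroup N] [Module Sᵐᵒᵖ N] : Prop where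
  torVanish : TorVanishAll S N T
  extVanish : ExtVanishAll Rᵐᵒᵖ T (MTensor S N T)
  thetaBij : Function.Bijective (MTensor.thetaFun S N T R)

/-- Membership in the Bass class `ℬ_T(R)`. -/
structure InBassClass (M : Type u) [AddCommGroup M] [Module Rᵐᵒᵖ M] : Prop where
  extVanish : ExtVanishAll Rᵐᵒᵖ T M
  torVanish : TorVanishAll S (T →ₗ[Rᵐᵒᵖ] M) T
  nuBij : Function.Bijective (MTensor.nuFun S R T M)

end Bimodules

/-! ## Cotilting and tilting modules -/

/-- A cotilting right `R`-module (Hügel–Coelho): finite injective dimension,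
`Ext^{i≥1}_R(Cᴵ, C) = 0` for every index set `I`, and there is a finite exact sequence
`0 → C_r → ⋯ → C_0 → Q → 0` with all `C_i ∈ Prod(C)` and `Q` an injective cogenerator. -/
structure IsCotilting (R : Type u) [Ring R] (C : Type u) [AddCommGroup C] [Module Rᵐᵒᵖ C] :
    Prop where
  finInjDim : ∃ n, InjDimLE Rᵐᵒᵖ C n
  extProdVanish : ∀ I : Type u, ExtVanishAll Rᵐᵒᵖ (I → C) C
  coresolution : ∃ (Q : ModuleCat.{u} Rᵐᵒᵖ) (r : ℕ),
    IsInjectiveCogenerator Rᵐᵒᵖ Q ∧ HasClassResolution Rᵐᵒᵖ (InProdClass Rᵐᵒᵖ C) r Q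

/-- An `n`-tilting right `R`-module (Miyashita). -/
structure IsNTilting (R : Type u) [Ring R] (T : Type u) [AddCommGroup T] [Module Rᵐᵒᵖ T]
    (n : ℕ) : Prop where
  fgProjRes : HasFGProjResolution Rᵐᵒᵖ T
  projDim : ProjDimLE Rᵐᵒᵖ T n
  extVanish : ExtVanishAll Rᵐᵒᵖ T T
  coresolution : HasClassCoresolution Rᵐᵒᵖ (InFinAddClass Rᵐᵒᵖ T) n (ModuleCat.of Rᵐᵒᵖ R)

/-- The data of a coresolution `0 → R → P 0 → P 1 → ⋯` of right `R`-modules. -/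
structure WakamatsuCoresolutionData (R : Type u) [Ring R] : Type (u + 1) where
  P : ℕ → Type u
  [instAdd : ∀ n, AddCommGroup (P n)]
  [instMod : ∀ n, Module Rᵐᵒᵖ (P n)]
  f0 : R →ₗ[Rᵐᵒᵖ] P 0
  d : ∀ n, P n →ₗ[Rᵐᵒᵖ] P (n + 1)

attribute [instance] WakamatsuCoresolutionData.instAdd WakamatsuCoresolutionData.instMod

/-- A Wakamatsu tilting right `R`-module: it admits a resolution by finitely generated
projective right `R`-modules, `Ext^{i≥1}_R(T, T) = 0`, and there is an exact sequence
`0 → R → T^0 → T^1 → ⋯` with each `T^i ∈ add(T)` and `Ext^1_R(Coker f, T) = 0` for every map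
`f` in this sequence. -/
def IsWakamatsuTiltingModule (R : Type u) [Ring R] (T : Type u) [AddCommGroup T]
    [Module Rᵐᵒᵖ T] : Prop :=
  HasFGProjResolution Rᵐᵒᵖ T ∧ ExtVanishAll Rᵐᵒᵖ T T ∧
    ∃ W : WakamatsuCoresolutionData R,
      Function.Injective W.f0 ∧ Function.Exact W.f0 (W.d 0) ∧
      (∀ n, Function.Exact (W.d n) (W.d (n + 1))) ∧
      (∀ n, InFinAddClass Rᵐᵒᵖ T (ModuleCat.of Rᵐᵒᵖ (W.P n))) ∧
      Ext1Vanishes Rᵐᵒᵖ ((W.P 0) ⧸ LinearMap.range W.f0) T ∧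
      (∀ n, Ext1Vanishes Rᵐᵒᵖ ((W.P (n + 1)) ⧸ LinearMap.range (W.d n)) T)

/-! ### Auxiliary development for Statement 5 -/

namespace MTensor

variable {S : Type u} [Ring S]
variable {N N' N'' : Type u} [AddCommGroup N] [Module Sᵐᵒᵖ N] [AddCommGroup N']
  [Module Sᵐᵒᵖ N'] [AddCommGroup N''] [Module Sᵐᵒᵖ N'']
variable {X X' X'' : Type u} [AddCommGroup X] [Module S X] [AddCommGroup X']
  [Module S X'] [AddCommGroup X''] [Module S X'']

theorem mk_add_left (n n' : N) (x : X) :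
    (mk (n + n') x : MTensor S N X) = mk n x + mk n' x := by
  show QuotientAddGroup.mk _ = _
  rw [TensorProduct.tmul_add]; rfl

@[simp] theorem mk_zero_left (x : X) : (mk (0 : N) x : MTensor S N X) = 0 := by
  show QuotientAddGroup.mk _ = _
  rw [TensorProduct.tmul_zero]; rfl

@[simp] theorem mk_zero_right (n : N) : (mk n (0 : X) : MTensor S N X) = 0 := by
  show QuotientAddGroup.mk _ = _
  rw [TensorProduct.zero_tmul]; rfl

theorem mk_rel (s : S) (n : N) (x : X) :
    (mk n (s • x) : MTensor S N X) = mk (op s • n) x := by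
  refine QuotientAddGroup.eq.2 ?_
  have : -((s • x) ⊗ₜ[ℤ] n) + x ⊗ₜ[ℤ] (op s • n)
      = -((s • x) ⊗ₜ[ℤ] n - x ⊗ₜ[ℤ] (op s • n)) := by abel
  rw [this]
  exact neg_mem (AddSubgroup.subset_closure ⟨s, x, n, rfl⟩)

theorem ind {p : MTensor S N X → Prop} (hmk : ∀ n x, p (mk n x))
    (hadd : ∀ a b, p a → p b → p (a + b)) : ∀ z, p z := by
  intro z
  obtain ⟨t, rfl⟩ := QuotientAddGroup.mk_surjective z
  induction t using TensorProduct.induction_on with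
  | zero => have h := hmk 0 0; rw [mk_zero_left] at h; exact h
  | tmul x n => exact hmk n x
  | add a b ha hb => exact hadd _ _ ha hb

theorem addHom_ext {A : Type*} [AddCommGroup A] {f g : MTensor S N X →+ A}
    (h : ∀ n x, f (mk n x) = g (mk n x)) : ∀ z, f z = g z := by
  refine ind (fun n x => h n x) (fun a b ha hb => ?_)
  simp [map_add, ha, hb]

@[simp] theorem lmap_mk (h : X →ₗ[S] X') (n : N) (x : X) :
    lmap h (mk n x : MTensor S N X) = mk n (h x) := rfl

@[simp] theorem map_mk (g : N →ₗ[Sᵐᵒᵖ] N') (n : N) (x : X) :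
    map g (mk n x : MTensor S N X) = mk (g n) x := rfl

theorem lmap_lmap (h' : X' →ₗ[S] X'') (h : X →ₗ[S] X') (z : MTensor S N X) :
    lmap h' (lmap h z) = lmap (h'.comp h) z :=
  addHom_ext (f := (lmap h').comp (lmap h)) (g := lmap (h'.comp h))
    (fun n x => by simp) z

theorem map_map (g' : N' →ₗ[Sᵐᵒᵖ] N'') (g : N →ₗ[Sᵐᵒᵖ] N') (z : MTensor S N X) :
    map g' (map g z) = map (g'.comp g) z :=
  addHom_ext (f := (map g').comp (map g)) (g := map (g'.comp g))
    (fun n x => by simp) z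

theorem map_lmap (g : N →ₗ[Sᵐᵒᵖ] N') (h : X →ₗ[S] X') (z : MTensor S N X) :
    map g (lmap h z) = lmap h (map g z) :=
  addHom_ext (f := (map g).comp (lmap h)) (g := (lmap h).comp (map g))
    (fun n x => by simp) z

theorem lmap_zero_map (z : MTensor S N X) : lmap (0 : X →ₗ[S] X') z = 0 :=
  addHom_ext (f := lmap 0) (g := 0) (fun n x => by simp) z

theorem map_zero_map (z : MTensor S N X) : map (0 : N →ₗ[Sᵐᵒᵖ] N') z = 0 :=
  addHom_ext (f := map 0) (g := 0) (fun n x => by simp) z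

theorem lmap_surjective (h : X →ₗ[S] X') (hs : Function.Surjective h) :
    Function.Surjective (lmap (N := N) h) := by
  refine fun z => ind (p := fun z => ∃ w, lmap h w = z) (fun n x => ?_)
    (fun a b ⟨wa, ha⟩ ⟨wb, hb⟩ => ⟨wa + wb, by simp [ha, hb]⟩) z
  obtain ⟨y, rfl⟩ := hs x
  exact ⟨mk n y, by simp⟩

theorem map_surjective (g : N →ₗ[Sᵐᵒᵖ] N') (hs : Function.Surjective g) :
    Function.Surjective (map (T := X) g) := by
  refine fun z => ind (p := fun z => ∃ w, map g w = z) (fun n x => ?_)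
    (fun a b ⟨wa, ha⟩ ⟨wb, hb⟩ => ⟨wa + wb, by simp [ha, hb]⟩) z
  obtain ⟨m, rfl⟩ := hs n
  exact ⟨mk m x, by simp⟩

/-- Lift an `S`-balanced biadditive map to `MTensor`. -/
def liftAH {A : Type*} [AddCommGroup A] (f : X →+ N →+ A)
    (hbal : ∀ (s : S) (x : X) (n : N), f (s • x) n = f x (op s • n)) :
    MTensor S N X →+ A :=
  QuotientAddGroup.lift _
    (TensorProduct.liftAddHom f
      (fun z x n => by simp [map_zsmul]))
    (by
      refine (AddSubgroup.closure_le _).2 ?_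
      rintro t ⟨s, x, n, rfl⟩
      simp only [SetLike.mem_coe, AddMonoidHom.mem_ker, map_sub,
        TensorProduct.liftAddHom_tmul]
      rw [hbal]; exact sub_self _)

@[simp] theorem liftAH_mk {A : Type*} [AddCommGroup A] (f : X →+ N →+ A) (hbal) (n : N) (x : X) :
    liftAH f hbal (mk n x : MTensor S N X) = f x n := rfl

end MTensor

/-! #### The iso `(κ →₀ Sᵐᵒᵖ) ⊗ X ≃ (κ →₀ X)` -/

namespace MTensor

section Sigma

variable {S : Type u} [Ring S] {κ : Type u}
variable {X X' : Type u} [AddCommGroup X] [Module S X] [AddCommGroup X'] [Module S X']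

/-- `σ : (κ →₀ Sᵐᵒᵖ) ⊗ X → (κ →₀ X)`. -/
def sigma : MTensor S (κ →₀ Sᵐᵒᵖ) X →+ (κ →₀ X) :=
  liftAH
    (AddMonoidHom.mk' (fun x => Finsupp.liftAddHom (fun i =>
        AddMonoidHom.mk' (fun a : Sᵐᵒᵖ => Finsupp.single i (unop a • x)) (fun a b => by
          simp [add_smul, Finsupp.single_add])))
      (fun x x' => by
        refine Finsupp.addHom_ext fun i a => ?_
        simp [smul_add, Finsupp.single_add]))
    (fun s x g => by
      simp only [AddMonoidHom.mk'_apply, Finsupp.liftAddHom_apply]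
      rw [Finsupp.sum_smul_index' (fun i => by simp)]
      refine Finsupp.sum_congr fun i _ => ?_
      simp [smul_eq_mul, mul_smul])

@[simp] theorem sigma_mk (g : κ →₀ Sᵐᵒᵖ) (x : X) :
    sigma (mk g x : MTensor S (κ →₀ Sᵐᵒᵖ) X) = g.sum fun i a => Finsupp.single i (unop a • x) :=
  rfl

/-- Inverse of `sigma`. -/
def sigmaInv : (κ →₀ X) →+ MTensor S (κ →₀ Sᵐᵒᵖ) X :=
  Finsupp.liftAddHom (fun i => AddMonoidHom.mk'
    (fun x => mk (Finsupp.single i 1) x) (fun x x' => mk_add_right _ x x'))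

@[simp] theorem sigmaInv_single (i : κ) (x : X) :
    sigmaInv (Finsupp.single i x) = (mk (Finsupp.single i 1) x : MTensor S (κ →₀ Sᵐᵒᵖ) X) := by
  simp [sigmaInv]

theorem sigma_sigmaInv (v : κ →₀ X) : sigma (sigmaInv (S := S) v) = v := by
  induction v using Finsupp.induction with
  | zero => simp
  | single_add i x f _ _ ih =>
    rw [map_add, map_add, sigmaInv_single, ih, sigma_mk,
      Finsupp.sum_single_index (by simp)]
    simp

theorem sigmaInv_sigma (z : MTensor S (κ →₀ Sᵐᵒᵖ) X) : sigmaInv (sigma z) = z := by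
  refine addHom_ext (f := sigmaInv.comp sigma) (g := AddMonoidHom.id _) (fun g x => ?_) z
  simp only [AddMonoidHom.coe_comp, Function.comp_apply, AddMonoidHom.id_apply, sigma_mk]
  rw [map_finsuppSum]
  have h1 : ∀ i (a : Sᵐᵒᵖ), sigmaInv (Finsupp.single i (unop a • x))
      = (mk (Finsupp.single i a) x : MTensor S (κ →₀ Sᵐᵒᵖ) X) := by
    intro i a
    rw [sigmaInv_single, mk_rel]
    congr 1
    rw [Finsupp.smul_single, smul_eq_mul, mul_one, op_unop]
  calc (g.sum fun i a => sigmaInv (Finsupp.single i (unop a • x)))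
      = g.sum fun i a => (mk (Finsupp.single i a) x : MTensor S (κ →₀ Sᵐᵒᵖ) X) :=
        Finsupp.sum_congr fun i _ => h1 i _
    _ = mk g x := by
        refine ((map_finsuppSum (AddMonoidHom.mk' (fun n => (mk n x : MTensor S (κ →₀ Sᵐᵒᵖ) X))
          (fun n n' => mk_add_left n n' x)) g (fun i a => Finsupp.single i a)).symm).trans ?_
        simp [Finsupp.sum_single]

theorem sigma_injective : Function.Injective (sigma (S := S) (κ := κ) (X := X)) :=
  Function.LeftInverse.injective sigmaInv_sigma

theorem sigma_surjective : Function.Surjective (sigma (S := S) (κ := κ) (X := X)) :=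
  Function.RightInverse.surjective sigma_sigmaInv

theorem sigma_lmap (h : X →ₗ[S] X') (z : MTensor S (κ →₀ Sᵐᵒᵖ) X) :
    sigma (lmap h z) = Finsupp.mapRange.addMonoidHom h.toAddMonoidHom (sigma z) := by
  refine addHom_ext (f := sigma.comp (lmap h))
    (g := (Finsupp.mapRange.addMonoidHom h.toAddMonoidHom).comp sigma) (fun g x => ?_) z
  simp only [AddMonoidHom.coe_comp, Function.comp_apply, lmap_mk, sigma_mk]
  rw [map_finsuppSum]
  exact Finsupp.sum_congr fun i _ => by simp

end Sigma

/-! #### The iso `M ⊗ (Fin k → S) ≃ (Fin k → M)` -/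

section Tau

variable {S : Type u} [Ring S] {k : ℕ}
variable {M M' : Type u} [AddCommGroup M] [Module Sᵐᵒᵖ M] [AddCommGroup M'] [Module Sᵐᵒᵖ M']

/-- The standard basis of `Fin k → S`. -/
def stdb (i : Fin k) : Fin k → S := Pi.single i 1

theorem sum_smul_stdb (x : Fin k → S) : ∑ i, x i • stdb i = x := by
  ext j
  rw [Finset.sum_apply]
  simp only [stdb, Pi.smul_apply, Pi.single_apply, smul_eq_mul, mul_ite, mul_one, mul_zero]
  simp [Finset.sum_ite_eq']

/-- `τ : M ⊗ (Fin k → S) → (Fin k → M)`. -/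
def tau : MTensor S M (Fin k → S) →+ (Fin k → M) :=
  liftAH
    (AddMonoidHom.mk' (fun x => AddMonoidHom.mk' (fun n => fun i => op (x i) • n)
        (fun n n' => by ext i; simp [smul_add]))
      (fun x x' => by ext n i; simp [add_smul]))
    (fun s x n => by
      ext i
      simp only [AddMonoidHom.mk'_apply, Pi.smul_apply, smul_eq_mul, op_mul, mul_smul])

@[simp] theorem tau_mk (n : M) (x : Fin k → S) :
    tau (mk n x : MTensor S M (Fin k → S)) = fun i => op (x i) • n := rfl

/-- Inverse of `tau`. -/
def tauInv : (Fin k → M) →+ MTensor S M (Fin k → S) :=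
  AddMonoidHom.mk' (fun v => ∑ i, mk (v i) (stdb i)) (fun v v' => by
    rw [← Finset.sum_add_distrib]
    exact Finset.sum_congr rfl fun i _ => mk_add_left _ _ _)

theorem tau_tauInv (v : Fin k → M) : tau (tauInv (S := S) v) = v := by
  show tau (∑ i, mk (v i) (stdb i)) = v
  rw [map_sum]
  ext j
  rw [Finset.sum_apply]
  simp only [tau_mk]
  have : ∀ i, op (stdb (S := S) i j) • v i = if i = j then v i else 0 := by
    intro i
    simp only [stdb, Pi.single_apply]
    by_cases h : j = i
    · subst h; simp
    · simp [h, Ne.symm h]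
  simp only [this]
  simp

theorem sum_mk_op_smul_stdb (n : M) (x : Fin k → S) :
    ∑ i, (mk (op (x i) • n) (stdb i) : MTensor S M (Fin k → S)) = mk n x := by
  have : ∀ i, (mk (op (x i) • n) (stdb i) : MTensor S M (Fin k → S)) = mk n (x i • stdb i) :=
    fun i => (mk_rel _ _ _).symm
  rw [Finset.sum_congr rfl fun i _ => this i]
  refine ((map_sum (AddMonoidHom.mk' (fun y => (mk n y : MTensor S M (Fin k → S)))
      (fun y y' => mk_add_right n y y')) (fun i => x i • stdb i) Finset.univ).symm).trans ?_
  simp only [AddMonoidHom.mk'_apply, sum_smul_stdb]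

theorem tauInv_tau (z : MTensor S M (Fin k → S)) : tauInv (tau z) = z := by
  refine addHom_ext (f := tauInv.comp tau) (g := AddMonoidHom.id _) (fun n x => ?_) z
  simp only [AddMonoidHom.coe_comp, Function.comp_apply, AddMonoidHom.id_apply, tau_mk]
  exact sum_mk_op_smul_stdb n x

theorem tau_injective : Function.Injective (tau (S := S) (M := M) (k := k)) :=
  Function.LeftInverse.injective tauInv_tau

theorem tau_surjective : Function.Surjective (tau (S := S) (M := M) (k := k)) :=
  Function.RightInverse.surjective tau_tauInv

theorem tau_map (g : M →ₗ[Sᵐᵒᵖ] M') (z : MTensor S M (Fin k → S)) :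
    tau (map g z) = fun i => g (tau z i) := by
  refine addHom_ext (f := tau.comp (map g))
    (g := (AddMonoidHom.mk' (fun v : Fin k → M => fun i => g (v i)) (fun v v' => by
      ext i; simp)).comp tau) (fun n x => ?_) z
  ext i
  simp [tau_mk]

end Tau

end MTensor

/-! #### The comparison map `ν : Hom_R(T,I) ⊗ X → Hom_R(Hom_S(X,T), I)` -/

section Nu2

variable {S R : Type u} [Ring S] [Ring R]
variable {T : Type u} [AddCommGroup T] [Module S T] [Module Rᵐᵒᵖ T] [SMulCommClass S Rᵐᵒᵖ T]
variable {I : Type u} [AddCommGroup I] [Module Rᵐᵒᵖ I]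
variable {X X' : Type u} [AddCommGroup X] [Module S X] [AddCommGroup X'] [Module S X']

variable (R)

/-- Precomposition on `Hom_S(-, T)` as an `Rᵐᵒᵖ`-linear map. -/
def precompT (T : Type u) [AddCommGroup T] [Module S T] [Module Rᵐᵒᵖ T]
    [SMulCommClass S Rᵐᵒᵖ T] (h : X →ₗ[S] X') :
    ((X' →ₗ[S] T) →ₗ[Rᵐᵒᵖ] (X →ₗ[S] T)) where
  toFun g := g.comp h
  map_add' g g' := LinearMap.ext fun x => rfl
  map_smul' ρ g := LinearMap.ext fun x => rfl

@[simp] theorem precompT_apply (h : X →ₗ[S] X') (g : X' →ₗ[S] T) (x : X) :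
    precompT R T h g x = g (h x) := rfl

variable {R}

/-- The natural comparison map `ν`. -/
def nuu : MTensor S (T →ₗ[Rᵐᵒᵖ] I) X →+ ((X →ₗ[S] T) →ₗ[Rᵐᵒᵖ] I) :=
  MTensor.liftAH
    (AddMonoidHom.mk' (fun x => AddMonoidHom.mk' (fun n : T →ₗ[Rᵐᵒᵖ] I =>
        { toFun := fun g : X →ₗ[S] T => n (g x)
          map_add' := fun g g' => by simp
          map_smul' := fun ρ g => by simp })
        (fun n n' => LinearMap.ext fun g => rfl))
      (fun x x' => by
        refine AddMonoidHom.ext fun n => LinearMap.ext fun g => ?_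
        simp))
    (fun s x n => by
      refine LinearMap.ext fun g => ?_
      simp only [AddMonoidHom.mk'_apply, LinearMap.coe_mk, AddHom.coe_mk]
      rw [map_smul, homDomSMul_apply, unop_op])

@[simp] theorem nuu_mk (n : T →ₗ[Rᵐᵒᵖ] I) (x : X) (g : X →ₗ[S] T) :
    nuu (MTensor.mk n x) g = n (g x) := rfl

theorem nuu_lmap (h : X →ₗ[S] X') (z : MTensor S (T →ₗ[Rᵐᵒᵖ] I) X) :
    nuu (MTensor.lmap h z) = (nuu z).comp (precompT R T h) := by
  refine MTensor.addHom_ext (f := nuu.comp (MTensor.lmap h))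
    (g := (AddMonoidHom.mk' (fun Φ : (X →ₗ[S] T) →ₗ[Rᵐᵒᵖ] I => Φ.comp (precompT R T h))
      (fun Φ Φ' => LinearMap.add_comp _ _ _)).comp nuu) (fun n x => ?_) z
  refine LinearMap.ext fun g => ?_
  simp

section FinFree

variable {k : ℕ}

variable (R)

/-- `c i : T → Hom_S(Fin k → S, T)`, `t ↦ (x ↦ x i • t)`. -/
def cT (T : Type u) [AddCommGroup T] [Module S T] [Module Rᵐᵒᵖ T] [SMulCommClass S Rᵐᵒᵖ T]
    (i : Fin k) : T →ₗ[Rᵐᵒᵖ] ((Fin k → S) →ₗ[S] T) where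
  toFun t :=
    { toFun := fun x => x i • t
      map_add' := fun x x' => by simp [add_smul]
      map_smul' := fun s x => by simp [Pi.smul_apply, smul_eq_mul, mul_smul] }
  map_add' t t' := LinearMap.ext fun x => by simp [smul_add]
  map_smul' ρ t := LinearMap.ext fun x => by
    simp only [LinearMap.coe_mk, AddHom.coe_mk, LinearMap.smul_apply, RingHom.id_apply]
    exact smul_comm _ _ _

@[simp] theorem cT_apply (i : Fin k) (t : T) (x : Fin k → S) : cT R T i t x = x i • t := rfl

variable {R}

/-- Inverse of `ν` on a finite free module. -/
def nuuInv : (((Fin k → S) →ₗ[S] T) →ₗ[Rᵐᵒᵖ] I) →+ MTensor S (T →ₗ[Rᵐᵒᵖ] I) (Fin k → S) :=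
  AddMonoidHom.mk' (fun Φ => ∑ i, MTensor.mk (Φ.comp (cT R T i)) (MTensor.stdb i))
    (fun Φ Φ' => by
      rw [← Finset.sum_add_distrib]
      refine Finset.sum_congr rfl fun i _ => ?_
      rw [LinearMap.add_comp, MTensor.mk_add_left])

theorem sum_cT_eval (g : (Fin k → S) →ₗ[S] T) : ∑ i, cT R T i (g (MTensor.stdb i)) = g := by
  refine LinearMap.ext fun x => ?_
  rw [LinearMap.coe_sum, Finset.sum_apply]
  simp only [cT_apply]
  calc ∑ i, x i • g (MTensor.stdb i) = ∑ i, g (x i • MTensor.stdb i) := by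
        exact Finset.sum_congr rfl fun i _ => (map_smul g _ _).symm
    _ = g x := by rw [← map_sum, MTensor.sum_smul_stdb]

theorem nuu_nuuInv (Φ : ((Fin k → S) →ₗ[S] T) →ₗ[Rᵐᵒᵖ] I) : nuu (nuuInv (I := I) Φ) = Φ := by
  show nuu (∑ i, MTensor.mk (Φ.comp (cT R T i)) (MTensor.stdb i)) = Φ
  rw [map_sum]
  refine LinearMap.ext fun g => ?_
  rw [LinearMap.coe_sum, Finset.sum_apply]
  simp only [nuu_mk, LinearMap.comp_apply]
  rw [← map_sum, sum_cT_eval]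

theorem nuuInv_nuu (z : MTensor S (T →ₗ[Rᵐᵒᵖ] I) (Fin k → S)) : nuuInv (nuu z) = z := by
  refine MTensor.ind (p := fun z => nuuInv (nuu z) = z) (fun n x => ?_)
    (fun a b ha hb => by beta_reduce at ha hb ⊢; rw [map_add, map_add, ha, hb]) z
  show ∑ i, MTensor.mk ((nuu (MTensor.mk n x)).comp (cT R T i)) (MTensor.stdb i) = MTensor.mk n x
  have : ∀ i, (nuu (MTensor.mk n x)).comp (cT R T i) = op (x i) • n := by
    intro i
    refine LinearMap.ext fun t => ?_
    rw [LinearMap.comp_apply, nuu_mk, cT_apply, homDomSMul_apply, unop_op]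
  rw [Finset.sum_congr rfl fun i _ => by rw [this i]]
  exact MTensor.sum_mk_op_smul_stdb n x

theorem nuu_injective :
    Function.Injective (nuu (S := S) (R := R) (T := T) (I := I) (X := Fin k → S)) :=
  Function.LeftInverse.injective nuuInv_nuu

theorem nuu_surjective :
    Function.Surjective (nuu (S := S) (R := R) (T := T) (I := I) (X := Fin k → S)) :=
  Function.RightInverse.surjective nuu_nuuInv

end FinFree

end Nu2

/-! #### Character modules and the flatness criterion -/

/-- The circle group `ℚ/ℤ`. -/
abbrev Dcirc : Type := AddCircle (1 : ℚ)

theorem char_extend {A B : Type u} [AddCommGroup A] [AddCommGroup B] (i : A →+ B)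
    (hi : Function.Injective i) (c : A →+ Dcirc) : ∃ c' : B →+ Dcirc, ∀ a, c' (i a) = c a := by
  obtain ⟨c', hc'⟩ := CharacterModule.dual_surjective_of_injective (R := ℤ)
    i.toIntLinearMap hi (c : CharacterModule A)
  exact ⟨c', fun a => DFunLike.congr_fun hc' a⟩

theorem char_ne_zero {A : Type u} [AddCommGroup A] {a : A} (h : a ≠ 0) :
    ∃ c : A →+ Dcirc, c a ≠ 0 := by
  obtain ⟨c, hc⟩ := CharacterModule.exists_character_apply_ne_zero_of_ne_zero h
  exact ⟨c, hc⟩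

section RChar

variable (S : Type u) [Ring S]

/-- The character module of a right `S`-module, as a left `S`-module. -/
def RChar (M : Type u) [AddCommGroup M] [Module Sᵐᵒᵖ M] : Type u := M →+ Dcirc

variable {M X : Type u} [AddCommGroup M] [Module Sᵐᵒᵖ M] [AddCommGroup X] [Module S X]

instance : AddCommGroup (RChar S M) := inferInstanceAs (AddCommGroup (M →+ Dcirc))

instance : FunLike (RChar S M) M Dcirc := inferInstanceAs (FunLike (M →+ Dcirc) M Dcirc)

instance : AddMonoidHomClass (RChar S M) M Dcirc :=
  inferInstanceAs (AddMonoidHomClass (M →+ Dcirc) M Dcirc)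

instance : SMul S (RChar S M) :=
  ⟨fun s c => (c : M →+ Dcirc).comp (DistribMulAction.toAddMonoidHom M (op s))⟩

@[simp] theorem RChar.smul_apply (s : S) (c : RChar S M) (m : M) : (s • c) m = c (op s • m) :=
  rfl

/-- View an element of `RChar` as a bare homomorphism. -/
def RChar.toHom (c : RChar S M) : M →+ Dcirc := c

@[ext] theorem RChar.ext {c c' : RChar S M} (h : ∀ m, c m = c' m) : c = c' :=
  DFunLike.ext _ _ h

instance : Module S (RChar S M) where
  one_smul c := RChar.ext S fun m => by simp
  mul_smul s s' c := RChar.ext S fun m => by simp [op_mul, mul_smul]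
  smul_zero s := RChar.ext S fun m => rfl
  smul_add s c c' := RChar.ext S fun m => rfl
  add_smul s s' c := RChar.ext S fun m => by
    show c (op (s + s') • m) = c (op s • m) + c (op s' • m)
    rw [op_add, add_smul, map_add]
  zero_smul c := RChar.ext S fun m => by
    show c (op (0 : S) • m) = 0
    rw [op_zero, zero_smul, map_zero]

variable {S}

/-- Adjunction: a character of `M ⊗ X` gives an `S`-map `X → M⋆`. -/
def toRChar (χ : MTensor S M X →+ Dcirc) : X →ₗ[S] RChar S M where
  toFun x := AddMonoidHom.mk' (fun n => χ (MTensor.mk n x))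
    (fun n n' => by
      show χ (MTensor.mk (n + n') x) = χ (MTensor.mk n x) + χ (MTensor.mk n' x)
      rw [MTensor.mk_add_left, map_add])
  map_add' x x' := RChar.ext S fun n => by
    show χ (MTensor.mk n (x + x')) = χ (MTensor.mk n x) + χ (MTensor.mk n x')
    rw [MTensor.mk_add_right, map_add]
  map_smul' s x := RChar.ext S fun n => by
    show χ (MTensor.mk n (s • x)) = χ (MTensor.mk (op s • n) x)
    rw [MTensor.mk_rel]

@[simp] theorem toRChar_apply (χ : MTensor S M X →+ Dcirc) (x : X) (n : M) :
    toRChar χ x n = χ (MTensor.mk n x) := rfl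

/-- Adjunction: an `S`-map `X → M⋆` gives a character of `M ⊗ X`. -/
def ofRChar (φ : X →ₗ[S] RChar S M) : MTensor S M X →+ Dcirc :=
  MTensor.liftAH
    (AddMonoidHom.mk' (fun x => RChar.toHom S (φ x)) (fun x x' => by
      show RChar.toHom S (φ (x + x')) = RChar.toHom S (φ x) + RChar.toHom S (φ x')
      rw [map_add]
      rfl))
    (fun s x n => by
      show (φ (s • x)) n = (φ x) (op s • n)
      rw [map_smul]
      rfl)

@[simp] theorem ofRChar_mk (φ : X →ₗ[S] RChar S M) (n : M) (x : X) :
    ofRChar φ (MTensor.mk n x) = φ x n := rfl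

end RChar

section FlatCrit

variable {S : Type u} [Ring S]

theorem isFlat_of_fg_inj {M : Type u} [AddCommGroup M] [Module Sᵐᵒᵖ M]
    (H : ∀ J : Ideal S, J.FG →
      Function.Injective (MTensor.lmap (N := M) (Submodule.subtype J))) :
    IsFlatRightModule S M := by
  classical
  -- injectivity over every left ideal
  have H' : ∀ J : Ideal S,
      Function.Injective (MTensor.lmap (N := M) (Submodule.subtype J)) := by
    intro J
    have key : ∀ z : MTensor S M ↥J, ∃ (J₀ : Ideal S) (hfg : J₀.FG) (hle : J₀ ≤ J)
        (z₀ : MTensor S M ↥J₀), MTensor.lmap (Submodule.inclusion hle) z₀ = z := by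
      refine MTensor.ind (fun n x => ?_) (fun a b ha hb => ?_)
      · refine ⟨Submodule.span S {(x : S)}, Submodule.fg_span_singleton _,
          ?_, MTensor.mk n ⟨(x : S), Submodule.mem_span_singleton_self _⟩, ?_⟩
        · rw [Submodule.span_singleton_le_iff_mem]; exact x.2
        · rw [MTensor.lmap_mk]
          congr 1
      · obtain ⟨J₁, hfg₁, hle₁, z₁, hz₁⟩ := ha
        obtain ⟨J₂, hfg₂, hle₂, z₂, hz₂⟩ := hb
        refine ⟨J₁ ⊔ J₂, Submodule.FG.sup hfg₁ hfg₂, sup_le hle₁ hle₂,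
          MTensor.lmap (Submodule.inclusion le_sup_left) z₁ +
          MTensor.lmap (Submodule.inclusion le_sup_right) z₂, ?_⟩
        rw [map_add, MTensor.lmap_lmap, MTensor.lmap_lmap]
        have e1 : (Submodule.inclusion (sup_le hle₁ hle₂)).comp
            (Submodule.inclusion (le_sup_left : J₁ ≤ J₁ ⊔ J₂)) = Submodule.inclusion hle₁ :=
          LinearMap.ext fun y => rfl
        have e2 : (Submodule.inclusion (sup_le hle₁ hle₂)).comp
            (Submodule.inclusion (le_sup_right : J₂ ≤ J₁ ⊔ J₂)) = Submodule.inclusion hle₂ :=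
          LinearMap.ext fun y => rfl
        rw [e1, e2, hz₁, hz₂]
    rw [injective_iff_map_eq_zero]
    intro z hz
    obtain ⟨J₀, hfg, hle, z₀, rfl⟩ := key z
    have hcomp : (Submodule.subtype J).comp (Submodule.inclusion hle)
        = Submodule.subtype J₀ := LinearMap.ext fun y => rfl
    have : MTensor.lmap (Submodule.subtype J₀) z₀ = 0 := by
      rw [← hcomp, ← MTensor.lmap_lmap, hz]
    have hz₀ : z₀ = 0 := by
      apply H J₀ hfg
      rw [this, map_zero]
    rw [hz₀, map_zero]
  -- Baer's criterion for the character module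
  have baer : Module.Baer S (RChar S M) := by
    intro J φ
    obtain ⟨χ', hχ'⟩ := char_extend (MTensor.lmap (N := M) (Submodule.subtype J)) (H' J)
      (ofRChar φ)
    refine ⟨toRChar χ', fun x mem => ?_⟩
    refine RChar.ext S fun n => ?_
    show χ' (MTensor.mk n x) = φ ⟨x, mem⟩ n
    have : (MTensor.mk n x : MTensor S M S)
        = MTensor.lmap (Submodule.subtype J) (MTensor.mk n (⟨x, mem⟩ : ↥J)) := rfl
    rw [this, hχ']
    rfl
  have hinj : Module.Injective S (RChar S M) := baer.injective
  -- the flatness chase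
  intro X Y _ _ _ _ g hg
  rw [injective_iff_map_eq_zero]
  intro z hz
  by_contra hne
  obtain ⟨c, hc⟩ := char_ne_zero hne
  obtain ⟨ψ, hψ⟩ := hinj.out g hg (toRChar c)
  have hfact : ∀ w : MTensor S M X, c w = ofRChar ψ (MTensor.lmap g w) := by
    refine MTensor.addHom_ext (f := c) (g := (ofRChar ψ).comp (MTensor.lmap g)) fun n x => ?_
    show c (MTensor.mk n x) = ofRChar ψ (MTensor.lmap g (MTensor.mk n x))
    rw [MTensor.lmap_mk, ofRChar_mk, hψ, toRChar_apply]
  exact hc (by rw [hfact z, hz, map_zero])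

end FlatCrit

/-! #### Coherence: finitely generated submodules of finite frees are finitely presented -/

section Coherence

variable {S : Type u} [Ring S]

theorem fp_of_injective_into_pi (hcoh : IsLeftCoherentRing S) :
    ∀ (k : ℕ) (M : Type u) [AddCommGroup M] [Module S M] (f : M →ₗ[S] (Fin k → S)),
      Function.Injective f → Module.Finite S M → Module.FinitePresentation S M := by
  intro k
  induction k with
  | zero =>
    intro M _ _ f hf _
    have hsub : Subsingleton M := ⟨fun a b => hf (Subsingleton.elim _ _)⟩
    refine Module.finitePresentation_of_surjective (0 : (Fin 0 → S) →ₗ[S] M)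
      (fun m => ⟨0, Subsingleton.elim _ _⟩) ?_
    rw [LinearMap.ker_zero]
    exact Module.Finite.fg_top
  | succ k ih =>
    intro M _ _ f hf hfin
    haveI := hfin
    set p1 : (Fin (k + 1) → S) →ₗ[S] (Fin k → S) :=
      LinearMap.pi (fun i => LinearMap.proj i.castSucc) with hp1
    set p2 : (Fin (k + 1) → S) →ₗ[S] S := LinearMap.proj (Fin.last k) with hp2
    set f₂ : M →ₗ[S] S := p2.comp f with hf₂
    have hJfg : (LinearMap.range f₂).FG := by
      rw [← Submodule.map_top]
      exact Submodule.FG.map _ Module.Finite.fg_top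
    haveI hJfp : Module.FinitePresentation S ↥(LinearMap.range f₂) :=
      hcoh (LinearMap.range f₂) hJfg
    set q : M →ₗ[S] ↥(LinearMap.range f₂) := f₂.rangeRestrict with hq
    have hqsurj : Function.Surjective q := LinearMap.surjective_rangeRestrict f₂
    have hkerfg : (LinearMap.ker q).FG := Module.FinitePresentation.fg_ker q hqsurj
    haveI : Module.Finite S ↥(LinearMap.ker q) := Module.Finite.iff_fg.mpr hkerfg
    set g : ↥(LinearMap.ker q) →ₗ[S] (Fin k → S) :=
      p1.comp (f.comp (LinearMap.ker q).subtype) with hg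
    have hginj : Function.Injective g := by
      intro a b hab
      apply Subtype.ext
      apply hf
      ext i
      refine Fin.lastCases ?_ (fun j => ?_) i
      · have ha : f₂ a = f₂ b := by
          have h1 : q a = 0 := a.2
          have h2 : q b = 0 := b.2
          have := congrArg Subtype.val (h1.trans h2.symm)
          exact this
        exact ha
      · exact congrFun hab j
    haveI : Module.FinitePresentation S ↥(LinearMap.ker q) :=
      ih ↥(LinearMap.ker q) g hginj inferInstance
    exact Module.finitePresentation_of_ker q hqsurj

/-- Present a finitely presented module by a finite free `Fin m → S`. -/
theorem exists_pres (P : Type u) [AddCommGroup P] [Module S P]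
    [h : Module.FinitePresentation S P] :
    ∃ (m : ℕ) (π : (Fin m → S) →ₗ[S] P),
      Function.Surjective π ∧ (LinearMap.ker π).FG := by
  classical
  obtain ⟨s, hs, hker⟩ := h
  set lc := Finsupp.linearCombination S ((↑) : s → P) with hlc
  have hlcs : Function.Surjective lc := by
    apply LinearMap.range_eq_top.mp
    simpa only [hlc, Finsupp.range_linearCombination, Subtype.range_coe_subtype,
      Finset.setOf_mem] using hs
  set e : (Fin s.card → S) ≃ₗ[S] (↥s →₀ S) :=
    (Finsupp.linearEquivFunOnFinite S S (Fin s.card)).symm.trans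
      (Finsupp.domLCongr s.equivFin.symm) with he
  refine ⟨s.card, lc.comp e.toLinearMap, hlcs.comp e.surjective, ?_⟩
  rw [LinearMap.ker_comp, Submodule.comap_equiv_eq_map_symm]
  exact Submodule.FG.map _ hker

/-- A resolution of an ideal `J` by finite free modules. -/
structure CohRes (S : Type u) [Ring S] (J : Ideal S) : Type u where
  k : ℕ → ℕ
  π : (Fin (k 0) → S) →ₗ[S] ↥J
  πsurj : Function.Surjective π
  d : ∀ j, (Fin (k (j + 1)) → S) →ₗ[S] (Fin (k j) → S)
  exact0 : LinearMap.ker π = LinearMap.range (d 0)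
  exact : ∀ j, LinearMap.ker (d j) = LinearMap.range (d (j + 1))

theorem cohRes_exists (hcoh : IsLeftCoherentRing S) (J : Ideal S) (hJ : J.FG) :
    Nonempty (CohRes S J) := by
  classical
  haveI : Module.FinitePresentation S ↥J := hcoh J hJ
  obtain ⟨k₀, π₀, hπ₀, hker₀⟩ := exists_pres (S := S) (↥J)
  -- stages
  let Stage := Σ m : ℕ, { P : Submodule S (Fin m → S) // P.FG }
  have nextEx : ∀ st : Stage, ∃ (m' : ℕ) (π' : (Fin m' → S) →ₗ[S] ↥st.2.val),
      Function.Surjective π' ∧ (LinearMap.ker π').FG := by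
    intro st
    haveI : Module.Finite S ↥st.2.val := Module.Finite.iff_fg.mpr st.2.2
    haveI : Module.FinitePresentation S ↥st.2.val :=
      fp_of_injective_into_pi hcoh st.1 _ st.2.val.subtype (Submodule.injective_subtype _)
        inferInstance
    obtain ⟨m', π', h1, h2⟩ := exists_pres (S := S) (↥st.2.val)
    exact ⟨m', π', h1, h2⟩
  let nextk : ∀ st : Stage, ℕ := fun st => (nextEx st).choose
  let nextπ : ∀ st : Stage, (Fin (nextk st) → S) →ₗ[S] ↥st.2.val :=
    fun st => (nextEx st).choose_spec.choose
  have nextπ_surj : ∀ st : Stage, Function.Surjective (nextπ st) :=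
    fun st => (nextEx st).choose_spec.choose_spec.1
  have nextπ_ker : ∀ st : Stage, (LinearMap.ker (nextπ st)).FG :=
    fun st => (nextEx st).choose_spec.choose_spec.2
  let stages : ℕ → Stage := fun i =>
    Nat.rec ⟨k₀, LinearMap.ker π₀, hker₀⟩
      (fun _ st => ⟨nextk st, LinearMap.ker (nextπ st), nextπ_ker st⟩) i
  refine ⟨{
    k := fun j => (stages j).1
    π := π₀
    πsurj := hπ₀
    d := fun j => ((stages j).2.val.subtype).comp (nextπ (stages j))
    exact0 := ?_
    exact := ?_ }⟩
  · show LinearMap.ker π₀ = LinearMap.range (((stages 0).2.val.subtype).comp (nextπ (stages 0)))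
    rw [LinearMap.range_comp, LinearMap.range_eq_top.mpr (nextπ_surj _), Submodule.map_top,
      Submodule.range_subtype]
    rfl
  · intro j
    show LinearMap.ker (((stages j).2.val.subtype).comp (nextπ (stages j))) = _
    rw [LinearMap.ker_comp, Submodule.ker_subtype, Submodule.comap_bot,
      LinearMap.range_comp, LinearMap.range_eq_top.mpr (nextπ_surj _), Submodule.map_top,
      Submodule.range_subtype]

end Coherence

/-! #### Tor-vanishing conditions along a coherent resolution -/

section BvSection

variable {S : Type u} [Ring S] {J : Ideal S}

/-- Target of the lowest differential. -/
def Glow (R : CohRes S J) : ℕ → Type u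
  | 0 => S
  | (j + 1) => Fin (R.k j) → S

instance (R : CohRes S J) : ∀ j, AddCommGroup (Glow R j)
  | 0 => inferInstanceAs (AddCommGroup S)
  | (j + 1) => inferInstanceAs (AddCommGroup (Fin (R.k j) → S))

instance (R : CohRes S J) : ∀ j, Module S (Glow R j)
  | 0 => inferInstanceAs (Module S S)
  | (j + 1) => inferInstanceAs (Module S (Fin (R.k j) → S))

/-- The augmented differential of the resolution. -/
def lowDiff (R : CohRes S J) : ∀ j, (Fin (R.k j) → S) →ₗ[S] Glow R j
  | 0 => (Submodule.subtype J).comp R.π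
  | (j + 1) => R.d j

theorem ker_lowDiff (R : CohRes S J) : ∀ j, LinearMap.ker (lowDiff R j) = LinearMap.range (R.d j)
  | 0 => by
      show LinearMap.ker ((Submodule.subtype J).comp R.π) = _
      rw [LinearMap.ker_comp, Submodule.ker_subtype, Submodule.comap_bot, R.exact0]
  | (j + 1) => R.exact j

theorem d_comp_d (R : CohRes S J) (j : ℕ) : (R.d j).comp (R.d (j + 1)) = 0 :=
  LinearMap.ext fun x => by
    have : R.d (j + 1) x ∈ LinearMap.ker (R.d j) := by
      rw [R.exact j]; exact ⟨x, rfl⟩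
    exact this

theorem lowDiff_comp_d (R : CohRes S J) (j : ℕ) : (lowDiff R j).comp (R.d j) = 0 :=
  LinearMap.ext fun x => by
    have : R.d j x ∈ LinearMap.ker (lowDiff R j) := by
      rw [ker_lowDiff]; exact ⟨x, rfl⟩
    exact this

/-- `Tor_{m+1}(M, S/J) = 0` relative to the resolution `R`. -/
def Bv (R : CohRes S J) (M : Type u) [AddCommGroup M] [Module Sᵐᵒᵖ M] (m : ℕ) : Prop :=
  ∀ y : MTensor S M (Fin (R.k m) → S), MTensor.lmap (lowDiff R m) y = 0 →
    ∃ w : MTensor S M (Fin (R.k (m + 1)) → S), MTensor.lmap (R.d m) w = y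

/-- Free modules satisfy all the vanishing conditions. -/
theorem bv_free (R : CohRes S J) (κ : Type u) (m : ℕ) : Bv R (κ →₀ Sᵐᵒᵖ) m := by
  classical
  intro y hy
  have hv : ∀ i, lowDiff R m (MTensor.sigma y i) = 0 := by
    intro i
    have := congrArg (fun t => (t : κ →₀ Glow R m) i) ((MTensor.sigma_lmap (lowDiff R m) y).symm.trans (by rw [hy, map_zero]))
    simpa [Finsupp.mapRange_apply] using this
  have hmem : ∀ i, MTensor.sigma y i ∈ LinearMap.range (R.d m) := by
    intro i
    rw [← ker_lowDiff]
    exact hv i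
  set u : κ → (Fin (R.k (m + 1)) → S) := fun i =>
    if h : MTensor.sigma y i = 0 then 0 else (hmem i).choose with hu
  have hdu : ∀ i, R.d m (u i) = MTensor.sigma y i := by
    intro i
    rw [hu]
    by_cases h : MTensor.sigma y i = 0
    · simp [h]
    · simpa [h] using (hmem i).choose_spec
  set w' : κ →₀ (Fin (R.k (m + 1)) → S) :=
    Finsupp.onFinset (MTensor.sigma y).support u (fun i hui => by
      by_contra hns
      rw [Finsupp.notMem_support_iff] at hns
      exact hui (by rw [hu]; simp [hns])) with hw'
  refine ⟨MTensor.sigmaInv w', MTensor.sigma_injective ?_⟩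
  rw [MTensor.sigma_lmap, MTensor.sigma_sigmaInv]
  refine Finsupp.ext fun i => ?_
  show R.d m (w' i) = MTensor.sigma y i
  rw [hw', Finsupp.onFinset_apply]
  exact hdu i

/-- Injectivity of `M ⊗ J → M ⊗ S` from the vanishing of `Tor_1`. -/
theorem inj_of_bv0 (R : CohRes S J) {M : Type u} [AddCommGroup M] [Module Sᵐᵒᵖ M]
    (h : Bv R M 0) : Function.Injective (MTensor.lmap (N := M) (Submodule.subtype J)) := by
  rw [injective_iff_map_eq_zero]
  intro z hz
  obtain ⟨y, hy⟩ := MTensor.lmap_surjective R.π R.πsurj z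
  have h0 : MTensor.lmap (lowDiff R 0) y = 0 := by
    show MTensor.lmap ((Submodule.subtype J).comp R.π) y = 0
    rw [← MTensor.lmap_lmap, hy, hz]
  obtain ⟨w, hw⟩ := h y h0
  have hπd : R.π.comp (R.d 0) = 0 := LinearMap.ext fun x => by
    have : R.d 0 x ∈ LinearMap.ker R.π := by rw [R.exact0]; exact ⟨x, rfl⟩
    exact this
  rw [← hy, ← hw, MTensor.lmap_lmap, hπd]
  exact MTensor.lmap_zero_map w

/-- Column injectivity over a finite free module. -/
theorem map_inj_finfree {M M' : Type u} [AddCommGroup M] [Module Sᵐᵒᵖ M] [AddCommGroup M']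
    [Module Sᵐᵒᵖ M'] (g : M →ₗ[Sᵐᵒᵖ] M') (hg : Function.Injective g) {k : ℕ} :
    Function.Injective (MTensor.map (T := Fin k → S) g) := by
  intro z z' hzz
  apply MTensor.tau_injective
  have := congrArg MTensor.tau hzz
  rw [MTensor.tau_map, MTensor.tau_map] at this
  exact funext fun i => hg (congrFun this i)

/-- Column exactness over a finite free module. -/
theorem map_exact_finfree {K F M : Type u} [AddCommGroup K] [Module Sᵐᵒᵖ K] [AddCommGroup F]
    [Module Sᵐᵒᵖ F] [AddCommGroup M] [Module Sᵐᵒᵖ M] (ι : K →ₗ[Sᵐᵒᵖ] F) (ε : F →ₗ[Sᵐᵒᵖ] M)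
    (hexact : LinearMap.ker ε = LinearMap.range ι) {k : ℕ}
    (w : MTensor S F (Fin k → S)) (hw : MTensor.map ε w = 0) :
    ∃ u : MTensor S K (Fin k → S), MTensor.map ι u = w := by
  have hv : ∀ i, MTensor.tau w i ∈ LinearMap.range ι := by
    intro i
    rw [← hexact]
    have := congrArg (fun t => (t : Fin k → M) i) ((MTensor.tau_map ε w).symm.trans (by rw [hw, map_zero]))
    simpa using this
  choose u hu using hv
  refine ⟨MTensor.tauInv u, MTensor.tau_injective ?_⟩
  rw [MTensor.tau_map]
  refine funext fun i => ?_
  rw [MTensor.tau_tauInv]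
  exact hu i

/-- Dimension shifting: descending the vanishing along a syzygy sequence. -/
theorem bv_descend (R : CohRes S J) {K F M : Type u} [AddCommGroup K] [Module Sᵐᵒᵖ K]
    [AddCommGroup F] [Module Sᵐᵒᵖ F] [AddCommGroup M] [Module Sᵐᵒᵖ M]
    (ι : K →ₗ[Sᵐᵒᵖ] F) (ε : F →ₗ[Sᵐᵒᵖ] M) (hι : Function.Injective ι)
    (hε : Function.Surjective ε) (hexact : LinearMap.ker ε = LinearMap.range ι)
    (hF : ∀ m, Bv R F m) (m : ℕ) (hM : Bv R M (m + 1)) : Bv R K m := by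
  intro z hz
  have h1 : MTensor.lmap (lowDiff R m) (MTensor.map ι z) = 0 := by
    rw [← MTensor.map_lmap, hz, map_zero]
  obtain ⟨w, hw⟩ := hF m (MTensor.map ι z) h1
  have hει : ε.comp ι = 0 := LinearMap.ext fun x => by
    have : ι x ∈ LinearMap.ker ε := by rw [hexact]; exact ⟨x, rfl⟩
    exact this
  have h2 : MTensor.lmap (lowDiff R (m + 1)) (MTensor.map ε w) = 0 := by
    show MTensor.lmap (R.d m) (MTensor.map ε w) = 0
    rw [← MTensor.map_lmap, hw, MTensor.map_map, hει]
    exact MTensor.map_zero_map z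
  obtain ⟨v, hv⟩ := hM (MTensor.map ε w) h2
  obtain ⟨vt, hvt⟩ := MTensor.map_surjective ε hε v
  set w' := w - MTensor.lmap (R.d (m + 1)) vt with hw'
  have h3 : MTensor.map ε w' = 0 := by
    rw [hw', map_sub, MTensor.map_lmap, hvt, hv, sub_self]
  obtain ⟨u, hu⟩ := map_exact_finfree ι ε hexact w' h3
  refine ⟨u, map_inj_finfree ι hι ?_⟩
  rw [MTensor.map_lmap, hu, hw', map_sub, MTensor.lmap_lmap, d_comp_d,
    MTensor.lmap_zero_map, sub_zero, hw]

end BvSection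

/-! #### Extension lemmas and Ext-vanishing from finite injective dimension -/

section ExtV

variable {S : Type u} [Ring S] {J : Ideal S}

/-- Extend a map killing `ker b` through `b`, into an injective module. -/
theorem extend_along {A₀ : Type u} [Ring A₀] {A B Q : Type u} [AddCommGroup A] [Module A₀ A]
    [AddCommGroup B] [Module A₀ B] [AddCommGroup Q] [Module A₀ Q]
    (hQ : Module.Injective A₀ Q) (b : A →ₗ[A₀] B) (Φ : A →ₗ[A₀] Q)
    (h : LinearMap.ker b ≤ LinearMap.ker Φ) : ∃ Ψ : B →ₗ[A₀] Q, Ψ.comp b = Φ := by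
  set φq := Submodule.liftQ (LinearMap.ker b) Φ h with hφq
  set e := b.quotKerEquivRange with he
  obtain ⟨Ψ, hΨ⟩ := hQ.out (LinearMap.range b).subtype (Submodule.injective_subtype _)
    (φq.comp e.symm.toLinearMap)
  refine ⟨Ψ, LinearMap.ext fun a => ?_⟩
  have h1 : Ψ (b a) = Ψ ((LinearMap.range b).subtype ⟨b a, LinearMap.mem_range_self b a⟩) := rfl
  rw [LinearMap.comp_apply, h1, hΨ]
  show φq (e.symm ⟨b a, _⟩) = Φ a
  have h2 : (⟨b a, LinearMap.mem_range_self b a⟩ : LinearMap.range b)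
      = e (Submodule.Quotient.mk a) :=
    Subtype.ext (LinearMap.quotKerEquivRange_apply_mk b a).symm
  rw [h2, LinearEquiv.symm_apply_apply]
  exact Submodule.liftQ_apply _ Φ a

/-- Lifting through a surjection from a finite free module. -/
theorem pi_lift {k : ℕ} {E W' : Type u} [AddCommGroup E] [Module S E] [AddCommGroup W']
    [Module S W'] (q : E →ₗ[S] W') (hq : Function.Surjective q)
    (χ : (Fin k → S) →ₗ[S] W') : ∃ χt : (Fin k → S) →ₗ[S] E, q.comp χt = χ := by
  classical
  choose v hv using fun i => hq (χ (MTensor.stdb i))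
  refine ⟨{ toFun := fun x => ∑ i, x i • v i
            map_add' := fun x x' => by
              simp only [Pi.add_apply, add_smul]
              exact Finset.sum_add_distrib
            map_smul' := fun s x => by
              simp only [RingHom.id_apply, Pi.smul_apply, smul_eq_mul, mul_smul,
                Finset.smul_sum] },
    LinearMap.ext fun x => ?_⟩
  show q (∑ i, x i • v i) = χ x
  rw [map_sum]
  calc ∑ i, q (x i • v i) = ∑ i, x i • χ (MTensor.stdb i) := by
        exact Finset.sum_congr rfl fun i _ => by rw [map_smul, hv]
    _ = χ x := by
        conv_rhs => rw [← MTensor.sum_smul_stdb x]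
        rw [map_sum]
        exact Finset.sum_congr rfl fun i _ => (map_smul χ _ _).symm

/-- Lifting through a surjection from `Glow`. -/
theorem glow_lift (R : CohRes S J) (j : ℕ) {E W' : Type u} [AddCommGroup E] [Module S E]
    [AddCommGroup W'] [Module S W'] (q : E →ₗ[S] W') (hq : Function.Surjective q)
    (χ : Glow R j →ₗ[S] W') : ∃ χt : Glow R j →ₗ[S] E, q.comp χt = χ := by
  cases j with
  | zero =>
    obtain ⟨eE, heE⟩ := hq (χ (show Glow R 0 from (1 : S)))
    let χt₀ : S →ₗ[S] E :=
      { toFun := fun s : S => s • eE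
        map_add' := fun s s' => add_smul s s' eE
        map_smul' := fun s x => mul_smul s x eE }
    refine ⟨χt₀, LinearMap.ext fun s => ?_⟩
    show q ((show S from s) • eE) = χ s
    rw [map_smul, heE, ← map_smul]
    congr 1
    show ((show S from s) * (1 : S) : S) = (show S from s)
    exact mul_one _
  | succ j' => exact pi_lift q hq χ

/-- Injective case of Ext-vanishing. -/
theorem extv_inj (R : CohRes S J) (W : Type u) [AddCommGroup W] [Module S W]
    (hW : Module.Injective S W) (j : ℕ) (φ : (Fin (R.k j) → S) →ₗ[S] W)
    (hφ : ∀ x, φ (R.d j x) = 0) : ∃ ψ : Glow R j →ₗ[S] W, φ = ψ.comp (lowDiff R j) := by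
  have hker : LinearMap.ker (lowDiff R j) ≤ LinearMap.ker φ := by
    intro x hx
    rw [ker_lowDiff] at hx
    obtain ⟨y, rfl⟩ := hx
    exact hφ y
  obtain ⟨ψ, hψ⟩ := extend_along hW (lowDiff R j) φ hker
  exact ⟨ψ, hψ.symm⟩

/-- Ext-vanishing above the injective dimension. -/
theorem extv (R : CohRes S J) : ∀ (n : ℕ) (W : Type u) [AddCommGroup W] [Module S W],
    InjDimLE S W n → ∀ j, n ≤ j → ∀ φ : (Fin (R.k j) → S) →ₗ[S] W,
      (∀ x, φ (R.d j x) = 0) → ∃ ψ : Glow R j →ₗ[S] W, φ = ψ.comp (lowDiff R j) := by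
  intro n
  induction n with
  | zero =>
    intro W _ _ hT j _ φ hφ
    exact extv_inj R W hT j φ hφ
  | succ n ih =>
    intro W _ _ hT j hj φ hφ
    obtain ⟨mo, hE, hrest⟩ := hT
    obtain ⟨j', rfl⟩ : ∃ j', j = j' + 1 := ⟨j - 1, by omega⟩
    set f : W →ₗ[S] ↥mo.E := mo.f with hf
    have hfinj : Function.Injective f := mo.inj
    obtain ⟨ψ₁, hψ₁⟩ := extv_inj R (↥mo.E) hE (j' + 1) (f.comp φ)
      (fun x => by
        show f (φ (R.d (j' + 1) x)) = 0
        rw [hφ x, map_zero])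
    -- pointwise form of hψ₁ : f (φ x) = ψ₁ (R.d j' x)
    have hψ₁' : ∀ x, f (φ x) = ψ₁ (R.d j' x) :=
      fun x => congrFun (congrArg (fun (F : _ →ₗ[S] _) => ⇑F) hψ₁) x
    set q := (LinearMap.range f).mkQ with hkq
    -- `ψ₂` is `ψ₁` retyped on the free module `Fin (R.k j') → S`
    set ψ₂ : (Fin (R.k j') → S) →ₗ[S] ↥mo.E := ψ₁ with hψ₂
    have hψ₁'' : ∀ x, f (φ x) = ψ₂ (R.d j' x) := fun x => hψ₁' x
    obtain ⟨χ, hχ⟩ := ih (↥mo.E ⧸ LinearMap.range f) hrest j' (by omega) (q.comp ψ₂)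
      (fun x => by
        show q (ψ₂ (R.d j' x)) = 0
        rw [← hψ₁'' x]
        rw [hkq, Submodule.mkQ_apply, Submodule.Quotient.mk_eq_zero]
        exact LinearMap.mem_range_self f (φ x))
    have hχ' : ∀ x, q (ψ₂ x) = χ (lowDiff R j' x) :=
      fun x => congrFun (congrArg (fun (F : _ →ₗ[S] _) => ⇑F) hχ) x
    obtain ⟨χt, hχt⟩ := glow_lift R j' q (Submodule.mkQ_surjective _) χ
    have hχt' : ∀ y, q (χt y) = χ y :=
      fun y => congrFun (congrArg (fun (F : _ →ₗ[S] _) => ⇑F) hχt) y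
    set ψ' : (Fin (R.k j') → S) →ₗ[S] ↥mo.E := ψ₂ - χt.comp (lowDiff R j') with hψ'
    have hrange : ∀ x, ψ' x ∈ LinearMap.range f := by
      intro x
      have : q (ψ' x) = 0 := by
        rw [hψ']
        simp only [LinearMap.sub_apply, LinearMap.comp_apply, map_sub]
        rw [hχ' x, hχt' (lowDiff R j' x), sub_self]
      rw [← Submodule.ker_mkQ (LinearMap.range f)]
      exact this
    set β : (Fin (R.k j') → S) →ₗ[S] W :=
      ((LinearEquiv.ofInjective f hfinj).symm.toLinearMap).comp
        (ψ'.codRestrict (LinearMap.range f) hrange) with hβ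
    have hfβ : ∀ x, f (β x) = ψ' x := by
      intro x
      show f ((LinearEquiv.ofInjective f hfinj).symm ⟨ψ' x, hrange x⟩) = ψ' x
      have h5 := (LinearEquiv.ofInjective f hfinj).apply_symm_apply ⟨ψ' x, hrange x⟩
      calc f ((LinearEquiv.ofInjective f hfinj).symm ⟨ψ' x, hrange x⟩)
          = ((LinearEquiv.ofInjective f hfinj) ((LinearEquiv.ofInjective f hfinj).symm
              ⟨ψ' x, hrange x⟩) : ↥(LinearMap.range f)) := rfl
        _ = ψ' x := by rw [h5]
    refine ⟨β, LinearMap.ext fun x => hfinj ?_⟩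
    show f (φ x) = f (β (lowDiff R (j' + 1) x))
    rw [hfβ (lowDiff R (j' + 1) x), hψ']
    show f (φ x) = ψ₂ (lowDiff R (j' + 1) x) - χt (lowDiff R j' (lowDiff R (j' + 1) x))
    have hdd : lowDiff R j' (lowDiff R (j' + 1) x) = 0 := by
      have := congrFun (congrArg (fun (F : _ →ₗ[S] _) => ⇑F) (lowDiff_comp_d R j')) x
      exact this
    rw [hdd, map_zero, sub_zero]
    exact hψ₁'' x

end ExtV

/-! #### The main vanishing lemma and assembly -/

section Main

variable {S R : Type u} [Ring S] [Ring R]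
variable {T : Type u} [AddCommGroup T] [Module S T] [Module Rᵐᵒᵖ T] [SMulCommClass S Rᵐᵒᵖ T]
variable {I : Type u} [AddCommGroup I] [Module Rᵐᵒᵖ I]

/-- `Tor_{n+1}(Hom_R(T,I), S/J)` vanishes when `injdim T ≤ n`. -/
theorem bvN (hI : Module.Injective Rᵐᵒᵖ I) {J : Ideal S} (Rres : CohRes S J) (n : ℕ)
    (hT : InjDimLE S T n) : Bv Rres (T →ₗ[Rᵐᵒᵖ] I) n := by
  intro y hy
  set dstar := precompT R T (Rres.d n) with hdstar
  have hker : LinearMap.ker dstar ≤ LinearMap.ker (nuu y) := by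
    intro φ hφ
    have hφ0 : dstar φ = 0 := hφ
    have hφ' : ∀ x, φ (Rres.d n x) = 0 :=
      fun x => congrFun (congrArg (fun (F : _ →ₗ[S] T) => ⇑F) hφ0) x
    obtain ⟨ψ, hψ⟩ := extv Rres n T hT n le_rfl φ hφ'
    show nuu y φ = 0
    rw [hψ]
    have h2 : nuu y (ψ.comp (lowDiff Rres n)) = nuu (MTensor.lmap (lowDiff Rres n) y) ψ := by
      rw [nuu_lmap]
      rfl
    rw [h2, hy, map_zero]
    rfl
  obtain ⟨Ψ, hΨ⟩ := extend_along hI dstar (nuu y) hker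
  refine ⟨nuuInv Ψ, nuu_injective ?_⟩
  rw [nuu_lmap, nuu_nuuInv]
  exact hΨ

end Main

section Assemble

variable {S : Type u} [Ring S]

theorem isFlat_free (κ : Type u) : IsFlatRightModule S (κ →₀ Sᵐᵒᵖ) := by
  intro X Y _ _ _ _ g hg z z' h
  apply MTensor.sigma_injective
  have h2 := congrArg MTensor.sigma h
  rw [MTensor.sigma_lmap, MTensor.sigma_lmap] at h2
  refine Finsupp.ext fun i => hg ?_
  have := congrArg (fun t => (t : κ →₀ Y) i) h2
  simpa [Finsupp.mapRange_apply] using this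

theorem flat_resolution (hcoh : IsLeftCoherentRing S) (n : ℕ) :
    ∀ (M : Type u) [AddCommGroup M] [Module Sᵐᵒᵖ M],
      (∀ (J : Ideal S), J.FG → ∀ Rres : CohRes S J, Bv Rres M n) →
      HasClassResolution Sᵐᵒᵖ (fun P => IsFlatRightModule S ↥P) n (ModuleCat.of Sᵐᵒᵖ M) := by
  induction n with
  | zero =>
    intro M _ _ hbv
    show IsFlatRightModule S M
    refine isFlat_of_fg_inj ?_
    intro J hJ
    obtain ⟨Rres⟩ := cohRes_exists hcoh J hJ
    exact inj_of_bv0 Rres (hbv J hJ Rres)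
  | succ n ih =>
    intro M _ _ hbv
    set εM : (M →₀ Sᵐᵒᵖ) →ₗ[Sᵐᵒᵖ] M := Finsupp.linearCombination Sᵐᵒᵖ (id : M → M) with hεM
    have hsurj : Function.Surjective εM :=
      Finsupp.linearCombination_surjective Sᵐᵒᵖ Function.surjective_id
    refine ⟨⟨ModuleCat.of Sᵐᵒᵖ (M →₀ Sᵐᵒᵖ), εM, hsurj⟩, isFlat_free _, ?_⟩
    apply ih
    intro J hJ Rres
    exact bv_descend Rres (LinearMap.ker εM).subtype εM (Submodule.injective_subtype _)
      hsurj (Submodule.range_subtype _).symm (fun m => bv_free Rres M m) n (hbv J hJ Rres)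

end Assemble
/-- If `S` is left coherent and `T` is an `(S,R)`-bimodule, then for every
injective right `R`-module `I`, the flat dimension of the right `S`-module `Hom_R(T, I)` is
at most the injective dimension of `_S T`. -/
theorem flatDim_hom_injective_le
    (S R : Type u) [Ring S] [Ring R]
    (T : Type u) [AddCommGroup T] [Module S T] [Module Rᵐᵒᵖ T] [SMulCommClass S Rᵐᵒᵖ T]
    (hScoh : IsLeftCoherentRing S)
    (I : Type u) [AddCommGroup I] [Module Rᵐᵒᵖ I] (hI : Module.Injective Rᵐᵒᵖ I)
    (n : ℕ) (hT : InjDimLE S T n) :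
    FlatDimLE S (T →ₗ[Rᵐᵒᵖ] I) n :=
  flat_resolution hScoh n (T →ₗ[Rᵐᵒᵖ] I) (fun J hJ Rres => bvN hI Rres n hT)
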